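/- Let F1 and F2 be nontrivial finite graphs with disjoint vertex sets and v0 ∈ V(F1). Then VC'(F1^{v0→F2}) = max{VC'(F1), VC'(F2)}, where F1^{v0→F2} is the substitution of v0 in F1 by F2. -/

import Mathlib

def Subst {V1 V2 : Type} (G1 : SimpleGraph V1) (G2 : SimpleGraph V2) (v : V1) :
    SimpleGraph ({u : V1 // u ≠ v} ⊕ V2) where
  Adj x y :=
    match x, y with
    | Sum.inl u, Sum.inl u' => G1.Adj u.1 u'.1
    | Sum.inl u, Sum.inr _ => G1.Adj u.1 v
    | Sum.inr _, Sum.inl u => G1.Adj u.1 v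
    | Sum.inr w, Sum.inr w' => G2.Adj w w'
  symm := ⟨by
    rintro (u | w) (u' | w') h
    · exact G1.adj_symm h
    · exact h
    · exact h
    · exact G2.adj_symm h⟩
  loopless := ⟨by
    rintro (u | w) h
    · exact G1.loopless.irrefl u.1 h
    · exact G2.loopless.irrefl w h⟩

/-- The VC dimension of (neighborhoods of) a graph: the largest size of a set of
vertices shattered by vertex neighborhoods. -/
noncomputable def VCdim {V : Type} (G : SimpleGraph V) : ℕ :=
  sSup {n | ∃ U : Set V, (∀ A ⊆ U, ∃ v, G.neighborSet v ∩ U = A) ∧ U.ncard = n}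

/-- The VC' dimension of a graph: the largest size of a set of vertices almost
shattered by vertex neighborhoods. -/
noncomputable def VCdim' {V : Type} (G : SimpleGraph V) : ℕ :=
  sSup {n | ∃ U : Set V,
    (∀ A : Set V, A ⊆ U → A ≠ ∅ → A ≠ U → ∃ v, G.neighborSet v ∩ U = A \ {v}) ∧
    U.ncard = n}

def AShat {V : Type} (G : SimpleGraph V) (U : Set V) : Prop :=
  ∀ A : Set V, A ⊆ U → A ≠ ∅ → A ≠ U → ∃ v, G.neighborSet v ∩ U = A \ {v}

lemma VCdim'_def {V : Type} (G : SimpleGraph V) :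
    VCdim' G = sSup {n | ∃ U : Set V, AShat G U ∧ U.ncard = n} := rfl

lemma ncard_le_VCdim' {V : Type} [Finite V] (G : SimpleGraph V) (U : Set V)
    (h : AShat G U) : U.ncard ≤ VCdim' G := by
  rw [VCdim'_def]
  apply le_csSup
  · refine ⟨Nat.card V, ?_⟩
    rintro n ⟨W, -, rfl⟩
    simpa [Set.ncard_univ] using Set.ncard_le_ncard (Set.subset_univ W) Set.finite_univ
  · exact ⟨U, h, rfl⟩

lemma VCdim'_le_of {V : Type} (G : SimpleGraph V) (m : ℕ)
    (h : ∀ U : Set V, AShat G U → U.ncard ≤ m) : VCdim' G ≤ m := by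
  rw [VCdim'_def]
  apply csSup_le
  · exact ⟨0, ∅, fun A hA h0 _ => absurd (Set.subset_empty_iff.mp hA) h0, Set.ncard_empty _⟩
  · rintro n ⟨U, hU, rfl⟩; exact h U hU

lemma AShat.image {V W : Type} {G : SimpleGraph V} {H : SimpleGraph W} {f : V → W}
    {U : Set V}
    (hadj : ∀ x, ∀ y ∈ U, f x ≠ f y → (H.Adj (f x) (f y) ↔ G.Adj x y))
    (h : AShat G U) : AShat H (f '' U) := by
  intro B hB hB0 hBU
  have hne' : U ∩ f ⁻¹' B ≠ ∅ := by
    obtain ⟨b, hb⟩ := Set.nonempty_iff_ne_empty.2 hB0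
    obtain ⟨y, hy, rfl⟩ := hB hb
    exact Set.nonempty_iff_ne_empty.1 ⟨y, hy, hb⟩
  have hnu' : U ∩ f ⁻¹' B ≠ U := by
    intro hEq
    apply hBU
    refine Set.Subset.antisymm hB (Set.image_subset_iff.mpr ?_)
    intro y hy
    exact (hEq.symm ▸ hy : y ∈ U ∩ f ⁻¹' B).2
  obtain ⟨x, hx⟩ := h (U ∩ f ⁻¹' B) Set.inter_subset_left hne' hnu'
  refine ⟨f x, Set.ext fun z => ?_⟩
  constructor
  · rintro ⟨hzadj, y, hy, rfl⟩
    have hne : f x ≠ f y := fun e => H.loopless.irrefl _ (e ▸ hzadj)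
    have hGxy : G.Adj x y := (hadj x y hy hne).1 hzadj
    have hyA : y ∈ (U ∩ f ⁻¹' B) \ {x} := hx ▸ Set.mem_inter hGxy hy
    exact ⟨hyA.1.2, hne.symm⟩
  · rintro ⟨hzB, hzx⟩
    obtain ⟨y, hy, rfl⟩ := hB hzB
    have hyx : y ≠ x := fun e => hzx (by rw [e]; exact rfl)
    have hyN : y ∈ G.neighborSet x ∩ U := by
      rw [hx]; exact ⟨⟨hy, hzB⟩, hyx⟩
    exact ⟨(hadj x y hy (Ne.symm hzx)).2 hyN.1, ⟨y, hy, rfl⟩⟩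

open Classical in
/-- Embedding of `V1` into the vertex set of the substitution, sending `v0` to `w`. -/
noncomputable def phi {V1 : Type} (V2 : Type) (v0 : V1) (w : V2) (u : V1) :
    ({u : V1 // u ≠ v0} ⊕ V2) :=
  if h : u = v0 then Sum.inr w else Sum.inl ⟨u, h⟩

/-- Projection of the vertex set of the substitution back to `V1`. -/
def psi {V1 V2 : Type} (v0 : V1) : ({u : V1 // u ≠ v0} ⊕ V2) → V1 :=
  Sum.elim Subtype.val fun _ => v0

lemma phi_injective {V1 V2 : Type} (v0 : V1) (w : V2) :
    Function.Injective (phi V2 v0 w) := by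
  intro a b h
  by_cases ha : a = v0 <;> by_cases hb : b = v0
  · rw [ha, hb]
  · rw [phi, phi, dif_pos ha, dif_neg hb] at h
    exact absurd h (by simp)
  · rw [phi, phi, dif_neg ha, dif_pos hb] at h
    exact absurd h (by simp)
  · rw [phi, phi, dif_neg ha, dif_neg hb] at h
    exact congrArg Subtype.val (Sum.inl_injective h)

lemma phi_adj {V1 V2 : Type} (F1 : SimpleGraph V1) (F2 : SimpleGraph V2) (v0 : V1) (w : V2)
    (x y : V1) (hne : phi V2 v0 w x ≠ phi V2 v0 w y) :
    ((Subst F1 F2 v0).Adj (phi V2 v0 w x) (phi V2 v0 w y) ↔ F1.Adj x y) := by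
  have hxy : x ≠ y := fun e => hne (by rw [e])
  by_cases hx : x = v0 <;> by_cases hy : y = v0
  · exact absurd (hx.trans hy.symm) hxy
  · rw [phi, phi, dif_pos hx, dif_neg hy]
    show F1.Adj y v0 ↔ F1.Adj x y
    rw [hx, F1.adj_comm]
  · rw [phi, phi, dif_neg hx, dif_pos hy]
    show F1.Adj x v0 ↔ F1.Adj x y
    rw [hy]
  · rw [phi, phi, dif_neg hx, dif_neg hy]
    exact Iff.rfl

lemma psi_adj {V1 V2 : Type} (F1 : SimpleGraph V1) (F2 : SimpleGraph V2) (v0 : V1)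
    (x y : ({u : V1 // u ≠ v0} ⊕ V2)) (hne : psi v0 x ≠ psi v0 y) :
    (F1.Adj (psi v0 x) (psi v0 y) ↔ (Subst F1 F2 v0).Adj x y) := by
  rcases x with u | w <;> rcases y with u' | w'
  · exact Iff.rfl
  · exact Iff.rfl
  · exact F1.adj_comm _ _
  · exact absurd rfl hne

/-- VC' dimension of a substitution is the max of the VC' dimensions. -/
theorem stmt14 {V1 V2 : Type} [Fintype V1] [Fintype V2] [Nonempty V1] [Nonempty V2]
    (F1 : SimpleGraph V1) (F2 : SimpleGraph V2) (v0 : V1) :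
    VCdim' (Subst F1 F2 v0) = max (VCdim' F1) (VCdim' F2) := by
  obtain ⟨w0⟩ := (inferInstance : Nonempty V2)
  apply le_antisymm
  · apply VCdim'_le_of
    intro U hU
    by_cases hcase : ∀ w w' : V2, Sum.inr w ∈ U → Sum.inr w' ∈ U → w = w'
    · -- at most one vertex of U lies in the copy of F2 : pull back to F1
      refine le_trans ?_ (le_max_left _ _)
      have hinj : Set.InjOn (psi (V2 := V2) v0) U := by
        rintro (u | w) hx (u' | w') hy h
        · exact congrArg Sum.inl (Subtype.ext h)
        · exact absurd h u.2
        · exact absurd h.symm u'.2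
        · exact congrArg Sum.inr (hcase w w' hx hy)
      rw [← Set.ncard_image_of_injOn hinj]
      exact ncard_le_VCdim' F1 _ (hU.image (fun x y _ hne => psi_adj F1 F2 v0 x y hne))
    · -- at least two vertices of U lie in the copy of F2
      push_neg at hcase
      obtain ⟨w1, w2, hw1, hw2, hww⟩ := hcase
      refine le_trans ?_ (le_max_right _ _)
      have hNoinl : ∀ u, Sum.inl u ∉ U := by
        intro u1 hu1
        have step1 : F1.Adj u1.1 v0 := by
          obtain ⟨x, hx⟩ := hU {Sum.inl u1, Sum.inr w1}
            (by rintro z (rfl | rfl); exacts [hu1, hw1])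
            (Set.Nonempty.ne_empty ⟨_, Set.mem_insert _ _⟩)
            (by
              intro h
              have h2 : (Sum.inr w2 : {u : V1 // u ≠ v0} ⊕ V2) ∈
                  ({Sum.inl u1, Sum.inr w1} : Set _) := h ▸ hw2
              rcases h2 with h2 | h2
              · simp at h2
              · exact hww (Sum.inr_injective h2).symm)
          rcases x with u | w
          · exfalso
            have h1 : (Sum.inr w1 : {u : V1 // u ≠ v0} ⊕ V2) ∈
                (Subst F1 F2 v0).neighborSet (Sum.inl u) ∩ U := by
              rw [hx]; exact ⟨Or.inr rfl, by simp⟩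
            have hadj1 : F1.Adj u.1 v0 := h1.1
            have h2 : (Sum.inr w2 : {u : V1 // u ≠ v0} ⊕ V2) ∈
                (Subst F1 F2 v0).neighborSet (Sum.inl u) ∩ U := ⟨hadj1, hw2⟩
            rw [hx] at h2
            rcases h2.1 with h | h
            · simp at h
            · exact hww (Sum.inr_injective h).symm
          · have h1 : (Sum.inl u1 : {u : V1 // u ≠ v0} ⊕ V2) ∈
                (Subst F1 F2 v0).neighborSet (Sum.inr w) ∩ U := by
              rw [hx]; exact ⟨Or.inl rfl, by simp⟩
            exact h1.1
        obtain ⟨x, hx⟩ := hU {Sum.inr w1}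
          (by rintro z hz; rw [Set.mem_singleton_iff] at hz; subst hz; exact hw1)
          (Set.singleton_nonempty _).ne_empty
          (by
            intro h
            have h2 : (Sum.inl u1 : {u : V1 // u ≠ v0} ⊕ V2) ∈
                ({Sum.inr w1} : Set _) := h ▸ hu1
            simp at h2)
        rcases x with u | w
        · have h1 : (Sum.inr w1 : {u : V1 // u ≠ v0} ⊕ V2) ∈
              (Subst F1 F2 v0).neighborSet (Sum.inl u) ∩ U := by
            rw [hx]; exact ⟨rfl, by simp⟩
          have hadj1 : F1.Adj u.1 v0 := h1.1
          have h2 : (Sum.inr w2 : {u : V1 // u ≠ v0} ⊕ V2) ∈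
              (Subst F1 F2 v0).neighborSet (Sum.inl u) ∩ U := ⟨hadj1, hw2⟩
          rw [hx] at h2
          exact hww (Sum.inr_injective h2.1).symm
        · have h1 : (Sum.inl u1 : {u : V1 // u ≠ v0} ⊕ V2) ∈
              (Subst F1 F2 v0).neighborSet (Sum.inr w) ∩ U := ⟨step1, hu1⟩
          rw [hx] at h1
          simpa using h1.1
      have hUeq : U = Sum.inr '' {w | Sum.inr w ∈ U} := by
        ext z
        constructor
        · intro hz
          rcases z with u | w
          · exact absurd hz (hNoinl u)
          · exact ⟨w, hz, rfl⟩
        · rintro ⟨w, hw, rfl⟩; exact hw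
      have hA2 : AShat F2 {w | Sum.inr w ∈ U} := by
        intro B hB hB0 hBU
        obtain ⟨x, hx⟩ := hU (Sum.inr '' B)
          (by rintro z ⟨b, hb, rfl⟩; exact hB hb)
          (by
            obtain ⟨b, hb⟩ := Set.nonempty_iff_ne_empty.2 hB0
            exact (Set.Nonempty.image _ ⟨b, hb⟩).ne_empty)
          (by
            intro h
            apply hBU
            ext w
            constructor
            · intro hw
              exact (h ▸ ⟨w, hw, rfl⟩ : Sum.inr w ∈ U)
            · intro hw
              obtain ⟨b, hb, he⟩ := (h.symm ▸ hw : Sum.inr w ∈ Sum.inr '' B)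
              exact (Sum.inr_injective he) ▸ hb)
        rcases x with u | w
        · exfalso
          by_cases hadj : F1.Adj u.1 v0
          · obtain ⟨w', hw', hwB⟩ : ∃ w', Sum.inr w' ∈ U ∧ w' ∉ B := by
              by_contra hc
              push_neg at hc
              exact hBU (Set.Subset.antisymm hB fun w hw => hc w hw)
            have hmem : (Sum.inr w' : {u : V1 // u ≠ v0} ⊕ V2) ∈
                (Subst F1 F2 v0).neighborSet (Sum.inl u) ∩ U := ⟨hadj, hw'⟩
            rw [hx] at hmem
            obtain ⟨b, hb, he⟩ := hmem.1
            exact hwB ((Sum.inr_injective he) ▸ hb)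
          · obtain ⟨b, hb⟩ := Set.nonempty_iff_ne_empty.2 hB0
            have hmem : (Sum.inr b : {u : V1 // u ≠ v0} ⊕ V2) ∈
                (Subst F1 F2 v0).neighborSet (Sum.inl u) ∩ U := by
              rw [hx]; exact ⟨⟨b, hb, rfl⟩, by simp⟩
            exact hadj hmem.1
        · refine ⟨w, Set.ext fun w' => ?_⟩
          constructor
          · rintro ⟨ha, hw'⟩
            have hmem : (Sum.inr w' : {u : V1 // u ≠ v0} ⊕ V2) ∈
                Sum.inr '' B \ {Sum.inr w} := hx ▸ ⟨ha, hw'⟩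
            obtain ⟨⟨b, hb, he⟩, hne⟩ := hmem
            exact ⟨(Sum.inr_injective he) ▸ hb, fun e => hne (by rw [e]; exact rfl)⟩
          · rintro ⟨hwB, hne⟩
            have hmem : (Sum.inr w' : {u : V1 // u ≠ v0} ⊕ V2) ∈
                (Subst F1 F2 v0).neighborSet (Sum.inr w) ∩ U := by
              rw [hx]
              exact ⟨⟨w', hwB, rfl⟩, fun e => hne (Sum.inr_injective e)⟩
            exact ⟨hmem.1, hB hwB⟩
      rw [hUeq, Set.ncard_image_of_injective _ Sum.inr_injective]
      exact ncard_le_VCdim' F2 _ hA2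
  · apply max_le
    · apply VCdim'_le_of
      intro U hU
      rw [← Set.ncard_image_of_injective U (phi_injective (V2 := V2) v0 w0)]
      exact ncard_le_VCdim' _ _ (hU.image (fun x y _ hne => phi_adj F1 F2 v0 w0 x y hne))
    · apply VCdim'_le_of
      intro U hU
      rw [← Set.ncard_image_of_injective U Sum.inr_injective]
      exact ncard_le_VCdim' _ _
        (hU.image (f := Sum.inr) (fun x y _ _ => Iff.rfl))
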